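/- Let k be a field of characteristic zero and (R,Δ) a commutative differential k-algebra with R noetherian. Then every Δ-prime ideal of R is a prime ideal. -/

import Mathlib

section Defs

variable {k R : Type*} [CommRing k] [CommRing R] [Algebra k R]

/-- An ideal stable under all derivations in `Δ`. -/
def IsDeltaIdeal (Δ : Set (Derivation k R R)) (I : Ideal R) : Prop :=
  ∀ δ ∈ Δ, ∀ x ∈ I, δ x ∈ I

/-- The `Δ`-core of an ideal `J`: the largest `Δ`-stable ideal contained in `J`. -/
def deltaCore (Δ : Set (Derivation k R R)) (J : Ideal R) : Ideal R :=
  sSup {I : Ideal R | IsDeltaIdeal Δ I ∧ I ≤ J}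

/-- A `Δ`-prime ideal: a proper `Δ`-ideal `Q` such that whenever a product of two
`Δ`-ideals lies in `Q`, one of them lies in `Q`. -/
def IsDeltaPrime (Δ : Set (Derivation k R R)) (Q : Ideal R) : Prop :=
  Q ≠ ⊤ ∧ IsDeltaIdeal Δ Q ∧
    ∀ I J : Ideal R, IsDeltaIdeal Δ I → IsDeltaIdeal Δ J → I * J ≤ Q → I ≤ Q ∨ J ≤ Q

/-- A `Δ`-primitive ideal: the `Δ`-core of a maximal ideal. -/
def IsDeltaPrimitive (Δ : Set (Derivation k R R)) (P : Ideal R) : Prop :=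
  ∃ M : Ideal R, M.IsMaximal ∧ deltaCore Δ M = P

end Defs

section Aux

variable {k R : Type*} [CommRing k] [CommRing R] [Algebra k R]

/-- The span of a `Δ`-stable set is a `Δ`-ideal. -/
theorem isDeltaIdeal_span (Δ : Set (Derivation k R R)) (S : Set R)
    (hS : ∀ δ ∈ Δ, ∀ s ∈ S, δ s ∈ S) : IsDeltaIdeal Δ (Ideal.span S) := by
  intro δ hδ
  set T : Ideal R :=
    { carrier := {x | x ∈ Ideal.span S ∧ δ x ∈ Ideal.span S}
      add_mem' := fun ha hb => ⟨add_mem ha.1 hb.1, by rw [map_add]; exact add_mem ha.2 hb.2⟩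
      zero_mem' := ⟨zero_mem _, by rw [map_zero]; exact zero_mem _⟩
      smul_mem' := by
        intro c x hx
        refine ⟨Ideal.mul_mem_left _ _ hx.1, ?_⟩
        rw [smul_eq_mul, Derivation.leibniz, smul_eq_mul, smul_eq_mul]
        exact add_mem (Ideal.mul_mem_left _ _ hx.2) (Ideal.mul_mem_right _ _ hx.1) } with hT
  have hle : Ideal.span S ≤ T :=
    Ideal.span_le.2 fun s hs =>
      ⟨Ideal.subset_span hs, Ideal.subset_span (hS δ hδ s hs)⟩
  intro x hx
  exact (hle hx).2

theorem isDeltaIdeal_mul (Δ : Set (Derivation k R R)) {I J : Ideal R}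
    (hI : IsDeltaIdeal Δ I) (hJ : IsDeltaIdeal Δ J) : IsDeltaIdeal Δ (I * J) := by
  intro δ hδ x hx
  refine Submodule.mul_induction_on hx (fun a ha b hb => ?_)
    (fun x y hx' hy' => by rw [map_add]; exact add_mem hx' hy')
  rw [Derivation.leibniz, smul_eq_mul, smul_eq_mul]
  refine add_mem (Ideal.mul_mem_mul ha (hJ δ hδ b hb)) ?_
  rw [mul_comm b (δ a)]
  exact Ideal.mul_mem_mul (hI δ hδ a ha) hb

theorem isDeltaIdeal_pow (Δ : Set (Derivation k R R)) {I : Ideal R}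
    (hI : IsDeltaIdeal Δ I) : ∀ n : ℕ, IsDeltaIdeal Δ (I ^ n)
  | 0 => by
    intro δ hδ x hx
    simp only [pow_zero, Ideal.one_eq_top, Submodule.mem_top]
  | (n + 1) => by
    rw [pow_succ]
    exact isDeltaIdeal_mul Δ (isDeltaIdeal_pow Δ hI n) hI

end Aux

section CharZeroAux

variable {k R : Type*} [Field k] [CharZero k] [CommRing R] [Algebra k R]

include k in
theorem mem_of_natCast_mul_mem (I : Ideal R) {m : ℕ} (hm : m ≠ 0) {x : R}
    (h : (m : R) * x ∈ I) : x ∈ I := by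
  have h1 : algebraMap k R ((m : k)⁻¹) * ((m : R) * x) ∈ I := Ideal.mul_mem_left _ _ h
  have h2 : algebraMap k R ((m : k)⁻¹) * (m : R) = 1 := by
    rw [← map_natCast (algebraMap k R) m, ← map_mul,
      inv_mul_cancel₀ (Nat.cast_ne_zero.2 hm), map_one]
  rwa [← mul_assoc, h2, one_mul] at h1

/-- The inductive step in Seidenberg's lemma. -/
theorem seidenberg_step {Δ : Set (Derivation k R R)} {I : Ideal R}
    (hI : IsDeltaIdeal Δ I) {δ : Derivation k R R} (hδ : δ ∈ Δ) (a : R) (m s : ℕ)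
    (h : a ^ (m + 1) * δ a ^ (s + 1) ∈ I) : a ^ m * δ a ^ (s + 3) ∈ I := by
  set c := δ a with hc
  have h1 : δ (a ^ (m + 1) * c ^ (s + 1)) ∈ I := hI δ hδ _ h
  rw [Derivation.leibniz, Derivation.leibniz_pow, Derivation.leibniz_pow] at h1
  simp only [smul_eq_mul, nsmul_eq_mul, Nat.add_sub_cancel, ← hc] at h1
  -- h1 : a^(m+1) * ((s+1) * (c^s * δ c)) + c^(s+1) * ((m+1) * (a^m * c)) ∈ I
  have h2 : c * (a ^ (m + 1) * (((s : R) + 1) * (c ^ s * δ c)) +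
      c ^ (s + 1) * (((m : R) + 1) * (a ^ m * c))) ∈ I := by
    refine Ideal.mul_mem_left _ _ ?_
    convert h1 using 2 <;> push_cast <;> ring
  have h3 : ((s : R) + 1) * δ c * (a ^ (m + 1) * c ^ (s + 1)) ∈ I :=
    Ideal.mul_mem_left _ _ h
  have heq : ((m : R) + 1) * (a ^ m * c ^ (s + 3)) =
      c * (a ^ (m + 1) * (((s : R) + 1) * (c ^ s * δ c)) +
        c ^ (s + 1) * (((m : R) + 1) * (a ^ m * c))) -
      ((s : R) + 1) * δ c * (a ^ (m + 1) * c ^ (s + 1)) := by ring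
  have h4 : ((m : R) + 1) * (a ^ m * c ^ (s + 3)) ∈ I := by
    rw [heq]; exact I.sub_mem h2 h3
  have h5 : ((m + 1 : ℕ) : R) * (a ^ m * c ^ (s + 3)) ∈ I := by push_cast; exact h4
  exact mem_of_natCast_mul_mem (k := k) I (Nat.succ_ne_zero m) h5

/-- Seidenberg: the radical of a differential ideal is differential. -/
theorem isDeltaIdeal_radical {Δ : Set (Derivation k R R)} {I : Ideal R}
    (hI : IsDeltaIdeal Δ I) : IsDeltaIdeal Δ I.radical := by
  intro δ hδ a ha
  obtain ⟨n, hn⟩ := ha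
  rcases Nat.eq_zero_or_pos n with rfl | hn1
  · exact ⟨0, by simpa using hn⟩
  set c := δ a with hc
  have key : ∀ j, j ≤ n - 1 → a ^ (n - 1 - j) * c ^ (2 * j + 1) ∈ I := by
    intro j
    induction j with
    | zero =>
      intro _
      have h1 : δ (a ^ n) ∈ I := hI δ hδ _ hn
      rw [Derivation.leibniz_pow] at h1
      simp only [smul_eq_mul, nsmul_eq_mul, ← hc] at h1
      have h2 : ((n : ℕ) : R) * (a ^ (n - 1) * c) ∈ I := by
        convert h1 using 1 <;> ring
      have := mem_of_natCast_mul_mem (k := k) I hn1.ne' h2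
      simpa using this
    | succ j ih =>
      intro hj
      have hj' : j ≤ n - 1 := Nat.le_of_succ_le hj
      have h := ih hj'
      have hm : n - 1 - j = (n - 1 - (j + 1)) + 1 := by omega
      rw [hm] at h
      have := seidenberg_step hI hδ a (n - 1 - (j + 1)) (2 * j) (by
        convert h using 2)
      convert this using 3 <;> omega
  have hfin := key (n - 1) le_rfl
  simp only [Nat.sub_self, pow_zero, one_mul] at hfin
  exact ⟨2 * (n - 1) + 1, hfin⟩

theorem mul_deriv_mem {Δ : Set (Derivation k R R)} {Q : Ideal R}
    (hrad : Q.radical = Q) (hQ : IsDeltaIdeal Δ Q) {δ : Derivation k R R}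
    (hδ : δ ∈ Δ) {x y : R} (h : x * y ∈ Q) : δ x * y ∈ Q := by
  have h1 : δ (x * y) ∈ Q := hQ δ hδ _ h
  rw [Derivation.leibniz, smul_eq_mul, smul_eq_mul] at h1
  have h2 : (δ x * y) ^ 2 ∈ Q := by
    have heq : (δ x * y) ^ 2 = (δ x * y) * (x * δ y + y * δ x) - (δ x * δ y) * (x * y) := by
      ring
    rw [heq]
    exact Q.sub_mem (Ideal.mul_mem_left _ _ h1) (Ideal.mul_mem_left _ _ h)
  have : δ x * y ∈ Q.radical := ⟨2, h2⟩
  rwa [hrad] at this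

end CharZeroAux

section Words

variable {k R : Type*} [CommRing k] [CommRing R] [Algebra k R]

/-- The set of all iterated derivatives of `a` by derivations from `Δ`. -/
def derivClosure (Δ : Set (Derivation k R R)) (a : R) : Set R :=
  {y | ∃ l : List (Derivation k R R), (∀ δ ∈ l, δ ∈ Δ) ∧
    y = l.foldr (fun δ z => δ z) a}

theorem self_mem_derivClosure (Δ : Set (Derivation k R R)) (a : R) :
    a ∈ derivClosure Δ a :=
  ⟨[], by simp, rfl⟩

theorem derivClosure_stable (Δ : Set (Derivation k R R)) (a : R) :
    ∀ δ ∈ Δ, ∀ s ∈ derivClosure Δ a, δ s ∈ derivClosure Δ a := by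
  rintro δ hδ s ⟨l, hl, rfl⟩
  exact ⟨δ :: l, by
    intro τ hτ
    rcases List.mem_cons.1 hτ with rfl | hτ
    · exact hδ
    · exact hl τ hτ, rfl⟩

end Words

section ProdLemma

variable {k R : Type*} [Field k] [CharZero k] [CommRing R] [Algebra k R]

theorem derivClosure_mul_mem {Δ : Set (Derivation k R R)} {Q : Ideal R}
    (hrad : Q.radical = Q) (hQ : IsDeltaIdeal Δ Q) {a b : R} (hab : a * b ∈ Q) :
    ∀ x ∈ derivClosure Δ a, ∀ y ∈ derivClosure Δ b, x * y ∈ Q := by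
  rintro x ⟨l, hl, rfl⟩ y ⟨m, hm, rfl⟩
  induction m with
  | nil =>
    simp only [List.foldr_nil]
    induction l with
    | nil => simpa using hab
    | cons δ l ihl =>
      have hδ : δ ∈ Δ := hl δ List.mem_cons_self
      have hl' : ∀ τ ∈ l, τ ∈ Δ := fun τ hτ => hl τ (List.mem_cons_of_mem δ hτ)
      exact mul_deriv_mem hrad hQ hδ (ihl hl')
  | cons δ m ihm =>
    have hδ : δ ∈ Δ := hm δ List.mem_cons_self
    have hm' : ∀ τ ∈ m, τ ∈ Δ := fun τ hτ => hm τ (List.mem_cons_of_mem δ hτ)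
    have h := ihm hm'
    rw [mul_comm] at h
    have := mul_deriv_mem hrad hQ hδ h
    rwa [mul_comm] at this

end ProdLemma

/-- If `R` is noetherian, every `Δ`-prime ideal of `R` is prime. -/
theorem isPrime_of_isDeltaPrime
    {k R : Type*} [Field k] [CharZero k] [CommRing R] [Algebra k R] [IsNoetherianRing R]
    (Δ : Set (Derivation k R R)) (Q : Ideal R) (hQ : IsDeltaPrime Δ Q) :
    Q.IsPrime := by
  obtain ⟨hQne, hQΔ, hQp⟩ := hQ
  -- Q is radical
  have hradΔ : IsDeltaIdeal Δ Q.radical := isDeltaIdeal_radical hQΔ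
  obtain ⟨n, hn⟩ : ∃ n, Q.radical ^ n ≤ Q :=
    Ideal.exists_radical_pow_le_of_fg Q (IsNoetherian.noetherian _)
  have hpowle : ∀ n : ℕ, ∀ J : Ideal R, IsDeltaIdeal Δ J → J ^ n ≤ Q → J ≤ Q := by
    intro n
    induction n with
    | zero =>
      intro J _ hle
      exfalso
      apply hQne
      rw [pow_zero, Ideal.one_eq_top] at hle
      exact top_le_iff.1 hle
    | succ n ih =>
      intro J hJ hle
      rw [pow_succ] at hle
      rcases hQp (J ^ n) J (isDeltaIdeal_pow Δ hJ n) hJ hle with h | h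
      · exact ih J hJ h
      · exact h
  have hrad : Q.radical = Q :=
    le_antisymm (hpowle n Q.radical hradΔ hn) Ideal.le_radical
  constructor
  · exact hQne
  · intro a b hab
    set Ia := Ideal.span (derivClosure Δ a) with hIa
    set Ib := Ideal.span (derivClosure Δ b) with hIb
    have hIaΔ : IsDeltaIdeal Δ Ia := isDeltaIdeal_span Δ _ (derivClosure_stable Δ a)
    have hIbΔ : IsDeltaIdeal Δ Ib := isDeltaIdeal_span Δ _ (derivClosure_stable Δ b)
    have hmul : Ia * Ib ≤ Q := by
      rw [hIa, hIb, Ideal.span_mul_span', Ideal.span_le]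
      rintro z hz
      rw [Set.mem_mul] at hz
      obtain ⟨x, hx, y, hy, rfl⟩ := hz
      exact derivClosure_mul_mem hrad hQΔ hab x hx y hy
    rcases hQp Ia Ib hIaΔ hIbΔ hmul with h | h
    · exact Or.inl (h (Ideal.subset_span (self_mem_derivClosure Δ a)))
    · exact Or.inr (h (Ideal.subset_span (self_mem_derivClosure Δ b)))
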